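/- Let n ≥ 1 and let A be a finite subset of ℝⁿ. For γ ∈ A let V_γ = {u ∈ ℝⁿ : ⟨δ, u⟩ ≤ ⟨γ, u⟩ for all δ ∈ A}. Let ε₀ > 0 and let c : A → ℝ be positive with c(α)/c(β) < e^{ε₀} for all α, β ∈ A. Then there exists c′ > 0 such that for all α, β ∈ A with α ≠ β, all s > 0, and all u ∈ V_β whose Euclidean distance to the set V_α is at least s, one has c(α)·e^{⟨α,u⟩} < e^{ε₀ − 2·c′·s·‖α−β‖} · c(β)·e^{⟨β,u⟩}. -/

import Mathlib

open scoped RealInnerProductSpace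

open Finset

section Aux

variable {E : Type*} [NormedAddCommGroup E] [InnerProductSpace ℝ E] [FiniteDimensional ℝ E]

/-- The cone of nonnegative combinations of a finite set. -/
def coneOf (T : Finset E) : Set E :=
  {y | ∃ lam : E → ℝ, (∀ a ∈ T, 0 ≤ lam a) ∧ y = ∑ a ∈ T, lam a • a}

/-- The linear map sending coefficients to their combination. -/
noncomputable def combo (B : Finset E) : (↥B → ℝ) →ₗ[ℝ] E :=
  Fintype.linearCombination ℝ (fun i : ↥B => (i : E))

lemma combo_apply (B : Finset E) (g : ↥B → ℝ) :
    combo B g = ∑ i : ↥B, g i • (i : E) := rfl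

omit [FiniteDimensional ℝ E] in
lemma sum_coe_eq (B : Finset E) (lam : E → ℝ) :
    (∑ i : ↥B, lam (i : E) • (i : E)) = ∑ a ∈ B, lam a • a :=
  Finset.sum_coe_sort B (fun a => lam a • a)

omit [FiniteDimensional ℝ E] in
lemma carath_step (T : Finset E) (lam : E → ℝ) (hlam : ∀ a ∈ T, 0 ≤ lam a)
    (cc : E → ℝ) (hccsum : ∑ a ∈ T, cc a • a = 0) (a₀ : E) (ha₀ : a₀ ∈ T) (hcc₀ : 0 < cc a₀) :
    ∃ (a₁ : E) (mu : E → ℝ), a₁ ∈ T ∧ (∀ a ∈ T, 0 ≤ mu a) ∧ mu a₁ = 0 ∧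
      (∑ a ∈ T, lam a • a) = ∑ a ∈ T, mu a • a := by
  classical
  set S := T.filter (fun a => 0 < cc a) with hS
  have hSne : S.Nonempty := ⟨a₀, Finset.mem_filter.2 ⟨ha₀, hcc₀⟩⟩
  obtain ⟨a₁, ha₁S, ha₁min⟩ := S.exists_min_image (fun a => lam a / cc a) hSne
  have ha₁T : a₁ ∈ T := (Finset.mem_filter.1 ha₁S).1
  have hcc₁ : 0 < cc a₁ := (Finset.mem_filter.1 ha₁S).2
  set t := lam a₁ / cc a₁ with ht
  have ht0 : 0 ≤ t := div_nonneg (hlam a₁ ha₁T) hcc₁.le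
  have htmul : t * cc a₁ = lam a₁ := by
    rw [ht, div_mul_cancel₀ _ hcc₁.ne']
  refine ⟨a₁, fun a => lam a - t * cc a, ha₁T, ?_, ?_, ?_⟩
  · intro a ha
    show 0 ≤ lam a - t * cc a
    by_cases hc : 0 < cc a
    · have h2 := ha₁min a (Finset.mem_filter.2 ⟨ha, hc⟩)
      rw [div_le_div_iff₀ hcc₁ hc] at h2
      nlinarith [htmul, hcc₁, h2]
    · push_neg at hc
      nlinarith [hlam a ha, mul_nonpos_of_nonneg_of_nonpos ht0 hc]
  · show lam a₁ - t * cc a₁ = 0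
    rw [htmul, sub_self]
  · have : ∑ a ∈ T, (lam a - t * cc a) • a
        = (∑ a ∈ T, lam a • a) - t • ∑ a ∈ T, cc a • a := by
      rw [Finset.smul_sum, ← Finset.sum_sub_distrib]
      congr 1; ext a; rw [sub_smul, smul_smul]
    rw [this, hccsum, smul_zero, sub_zero]

/-- Carathéodory for cones. -/
lemma carath (T : Finset E) (y : E) (hy : y ∈ coneOf T) :
    ∃ B : Finset E, B ⊆ T ∧ LinearIndependent ℝ ((↑) : ↥B → E) ∧ y ∈ coneOf B := by
  classical
  induction T using Finset.strongInductionOn with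
  | _ T ih =>
    by_cases hind : LinearIndependent ℝ ((↑) : ↥T → E)
    · exact ⟨T, subset_rfl, hind, hy⟩
    · obtain ⟨g, hgsum, i₀, hgi₀⟩ := Fintype.not_linearIndependent_iff.1 hind
      obtain ⟨lam, hlam, hylam⟩ := hy
      set cc : E → ℝ := fun a => if h : a ∈ T then g ⟨a, h⟩ else 0 with hcc
      have hccsum : ∑ a ∈ T, cc a • a = 0 := by
        rw [← sum_coe_eq T cc] at *
        rw [← hgsum]
        apply Finset.sum_congr rfl
        intro i _
        simp [hcc, i.2]
      have hex : ∃ (a₀ : E) (c' : E → ℝ), a₀ ∈ T ∧ (∑ a ∈ T, c' a • a = 0) ∧ 0 < c' a₀ := by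
        rcases lt_trichotomy (g i₀) 0 with h | h | h
        · refine ⟨i₀, -cc, i₀.2, by simp [hccsum], ?_⟩
          simp only [Pi.neg_apply, hcc, dif_pos i₀.2]
          simpa using h
        · exact absurd h hgi₀
        · refine ⟨i₀, cc, i₀.2, hccsum, ?_⟩
          simpa [hcc, i₀.2] using h
      obtain ⟨a₀, c', ha₀, hc'sum, hc'pos⟩ := hex
      obtain ⟨a₁, mu, ha₁, hmu, hmu₁, hsum⟩ := carath_step T lam hlam c' hc'sum a₀ ha₀ hc'pos
      have hyT : y ∈ coneOf (T.erase a₁) := by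
        refine ⟨mu, fun a ha => hmu a (Finset.mem_of_mem_erase ha), ?_⟩
        rw [hylam, hsum, ← Finset.add_sum_erase T _ ha₁, hmu₁, zero_smul, zero_add]
      obtain ⟨B, hBsub, hBli, hyB⟩ := ih (T.erase a₁) (Finset.erase_ssubset ha₁) hyT
      exact ⟨B, hBsub.trans (Finset.erase_subset _ _), hBli, hyB⟩

/-- Coefficient bound for linearly independent families. -/
lemma coeff_bound (B : Finset E) (hB : LinearIndependent ℝ ((↑) : ↥B → E)) :
    ∃ K : ℝ, 0 < K ∧ ∀ lam : E → ℝ, (∀ a ∈ B, 0 ≤ lam a) →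
      ∑ a ∈ B, lam a ≤ K * ‖∑ a ∈ B, lam a • a‖ := by
  classical
  have hker : LinearMap.ker (combo B) = ⊥ := by
    rw [LinearMap.ker_eq_bot]
    intro g₁ g₂ hg
    have h := Fintype.linearIndependent_iff.1 hB (g₁ - g₂) (by
      simp only [Pi.sub_apply, sub_smul, Finset.sum_sub_distrib]
      rw [← combo_apply, ← combo_apply, hg, sub_self])
    funext i
    have h2 := h i
    simpa [sub_eq_zero] using h2
  obtain ⟨K₀, hK₀pos, hK₀⟩ := (combo B).exists_antilipschitzWith hker
  refine ⟨((B.card : ℝ) + 1) * (K₀ : ℝ), mul_pos (by positivity) (by exact_mod_cast hK₀pos), ?_⟩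
  intro lam hlam
  set g : ↥B → ℝ := fun i => lam (i : E) with hg
  have hnorm : ‖g‖ ≤ K₀ * ‖combo B g‖ := by
    have := hK₀.le_mul_dist g 0
    simpa [dist_eq_norm] using this
  have hcombo : combo B g = ∑ a ∈ B, lam a • a := by
    rw [combo_apply]; exact sum_coe_eq B lam
  have hsum : ∑ a ∈ B, lam a = ∑ i : ↥B, g i := by
    rw [hg]
    exact (Finset.sum_coe_sort B lam).symm
  rw [hsum, ← hcombo]
  calc ∑ i : ↥B, g i ≤ ∑ i : (B : Set E), ‖g‖ := by
        apply Finset.sum_le_sum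
        intro i _
        calc g i ≤ |g i| := le_abs_self _
          _ = ‖g i‖ := rfl
          _ ≤ ‖g‖ := norm_le_pi_norm g i
    _ = (B.card : ℝ) * ‖g‖ := by
        rw [Finset.sum_const, nsmul_eq_mul]
        congr 1
        simp
    _ ≤ (B.card : ℝ) * (K₀ * ‖combo B g‖) := by
        apply mul_le_mul_of_nonneg_left hnorm (by positivity)
    _ ≤ ((B.card : ℝ) + 1) * K₀ * ‖combo B g‖ := by
        have : (0:ℝ) ≤ ‖combo B g‖ := norm_nonneg _
        nlinarith [K₀.coe_nonneg]


lemma combo_ker (B : Finset E) (hB : LinearIndependent ℝ ((↑) : ↥B → E)) :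
    LinearMap.ker (combo B) = ⊥ := by
  rw [LinearMap.ker_eq_bot]
  intro g₁ g₂ hg
  have h := Fintype.linearIndependent_iff.1 hB (g₁ - g₂) (by
    simp only [Pi.sub_apply, sub_smul, Finset.sum_sub_distrib]
    rw [← combo_apply, ← combo_apply, hg, sub_self])
  funext i
  have h2 := h i
  simpa [sub_eq_zero] using h2

lemma coneOf_eq_image (B : Finset E) :
    coneOf B = (combo B) '' {g : ↥B → ℝ | ∀ i, 0 ≤ g i} := by
  classical
  ext y
  constructor
  · rintro ⟨lam, hlam, rfl⟩
    exact ⟨fun i => lam (i : E), fun i => hlam (i : E) i.2,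
      by rw [combo_apply]; exact sum_coe_eq B lam⟩
  · rintro ⟨g, hg, rfl⟩
    refine ⟨fun a => if h : a ∈ B then g ⟨a, h⟩ else 0, ?_, ?_⟩
    · intro a ha
      show 0 ≤ if h : a ∈ B then g ⟨a, h⟩ else 0
      rw [dif_pos ha]
      exact hg _
    · rw [combo_apply, ← sum_coe_eq B (fun a => if h : a ∈ B then g ⟨a, h⟩ else 0)]
      apply Finset.sum_congr rfl
      intro i _
      rw [dif_pos i.2]

lemma isClosed_coneOf_linIndep (B : Finset E) (hB : LinearIndependent ℝ ((↑) : ↥B → E)) :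
    IsClosed (coneOf B) := by
  rw [coneOf_eq_image]
  obtain ⟨K₀, hK₀pos, hK₀⟩ := (combo B).exists_antilipschitzWith (combo_ker B hB)
  have hcont : UniformContinuous (combo B) :=
    (LinearMap.toContinuousLinearMap (combo B)).uniformContinuous
  have hemb := hK₀.isClosedEmbedding hcont
  apply hemb.isClosedMap
  have : {g : ↥B → ℝ | ∀ i, 0 ≤ g i} = ⋂ i : ↥B, {g : ↥B → ℝ | 0 ≤ g i} := by
    ext g; simp [Set.mem_iInter]
  rw [this]
  exact isClosed_iInter fun i => isClosed_le continuous_const (continuous_apply i)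

lemma coneOf_mono {B T : Finset E} (hBT : B ⊆ T) : coneOf B ⊆ coneOf T := by
  classical
  rintro y ⟨lam, hlam, rfl⟩
  refine ⟨fun a => if a ∈ B then lam a else 0, ?_, ?_⟩
  · intro a ha
    show 0 ≤ if a ∈ B then lam a else 0
    split
    · exact hlam a ‹_›
    · exact le_refl 0
  · rw [← Finset.sum_subset hBT (fun a _ haB => by
      show (if a ∈ B then lam a else 0) • a = 0
      rw [if_neg haB, zero_smul])]
    apply Finset.sum_congr rfl
    intro a ha
    show lam a • a = (if a ∈ B then lam a else 0) • a
    rw [if_pos ha]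

lemma isClosed_coneOf (T : Finset E) : IsClosed (coneOf T) := by
  classical
  have heq : coneOf T =
      ⋃ B ∈ {B : Finset E | B ⊆ T ∧ LinearIndependent ℝ ((↑) : ↥B → E)}, coneOf B := by
    ext y
    simp only [Set.mem_iUnion, Set.mem_setOf_eq, exists_prop]
    constructor
    · intro hy
      obtain ⟨B, h1, h2, h3⟩ := carath T y hy
      exact ⟨B, ⟨h1, h2⟩, h3⟩
    · rintro ⟨B, ⟨h1, _⟩, hy⟩
      exact coneOf_mono h1 hy
  rw [heq]
  apply Set.Finite.isClosed_biUnion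
  · apply Set.Finite.subset (T.powerset.finite_toSet)
    intro B hB
    simp only [Finset.coe_powerset, Set.mem_preimage, Set.mem_powerset_iff, Finset.coe_subset]
    exact hB.1
  · intro B hB
    exact isClosed_coneOf_linIndep B hB.2

lemma convex_coneOf (T : Finset E) : Convex ℝ (coneOf T) := by
  rintro y₁ ⟨l₁, h₁, rfl⟩ y₂ ⟨l₂, h₂, rfl⟩ p q hp hq hpq
  refine ⟨fun a => p * l₁ a + q * l₂ a, ?_, ?_⟩
  · intro a ha
    have := h₁ a ha; have := h₂ a ha
    positivity
  · rw [Finset.smul_sum, Finset.smul_sum, ← Finset.sum_add_distrib]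
    apply Finset.sum_congr rfl
    intro a _
    rw [add_smul, smul_smul, smul_smul]

lemma zero_mem_coneOf (T : Finset E) : (0 : E) ∈ coneOf T :=
  ⟨fun _ => 0, fun _ _ => le_refl 0, by simp⟩

lemma smul_mem_coneOf {T : Finset E} {a : E} (ha : a ∈ T) {t : ℝ} (ht : 0 ≤ t) :
    t • a ∈ coneOf T := by
  classical
  refine ⟨fun b => if b = a then t else 0, ?_, ?_⟩
  · intro b _
    show 0 ≤ if b = a then t else 0
    split
    · exact ht
    · exact le_refl 0
  · rw [Finset.sum_eq_single_of_mem a ha (fun b _ hb => by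
      show (if b = a then t else 0) • b = 0
      rw [if_neg hb, zero_smul])]
    show t • a = (if a = a then t else 0) • a
    rw [if_pos rfl]

lemma farkas (T : Finset E) (y : E)
    (hy : ∀ x : E, (∀ a ∈ T, ⟪a, x⟫ ≤ 0) → ⟪y, x⟫ ≤ 0) : y ∈ coneOf T := by
  by_contra hnot
  obtain ⟨f, u, hfb, hfy⟩ :=
    geometric_hahn_banach_closed_point (convex_coneOf T) (isClosed_coneOf T) hnot
  have hu0 : 0 < u := by
    have := hfb 0 (zero_mem_coneOf T)
    simpa using this
  have hfa : ∀ a ∈ T, f a ≤ 0 := by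
    intro a ha
    by_contra hpos
    push_neg at hpos
    have htn : 0 ≤ (u + 1) / f a := by positivity
    have h3 := hfb (((u + 1) / f a) • a) (smul_mem_coneOf ha htn)
    rw [map_smul, smul_eq_mul, div_mul_cancel₀ _ (ne_of_gt hpos)] at h3
    linarith
  set x₀ := (InnerProductSpace.toDual ℝ E).symm f with hx₀
  have hx₀app : ∀ z : E, ⟪x₀, z⟫ = f z := fun z => InnerProductSpace.toDual_symm_apply
  have h1 : ∀ a ∈ T, ⟪a, x₀⟫ ≤ 0 := fun a ha => by
    rw [real_inner_comm, hx₀app]; exact hfa a ha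
  have h2 := hy x₀ h1
  rw [real_inner_comm, hx₀app] at h2
  linarith

lemma hoffman (T : Finset E) :
    ∃ K : ℝ, 0 < K ∧ ∀ (u : E) (h : ℝ), 0 ≤ h → (∀ a ∈ T, ⟪a, u⟫ ≤ h) →
      Metric.infDist u {w : E | ∀ a ∈ T, ⟪a, w⟫ ≤ 0} ≤ K * h := by
  classical
  set KB : Finset E → ℝ := fun B =>
    if hB : LinearIndependent ℝ ((↑) : ↥B → E) then (coeff_bound B hB).choose else 1 with hKB
  set K := 1 + ∑ B ∈ T.powerset, |KB B| with hKdef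
  have hsum0 : 0 ≤ ∑ B ∈ T.powerset, |KB B| := Finset.sum_nonneg fun _ _ => abs_nonneg _
  have hKpos : 0 < K := by rw [hKdef]; linarith
  have hKle : ∀ B ∈ T.powerset, KB B ≤ K := by
    intro B hB
    calc KB B ≤ |KB B| := le_abs_self _
      _ ≤ ∑ B ∈ T.powerset, |KB B| :=
          Finset.single_le_sum (f := fun B => |KB B|) (fun _ _ => abs_nonneg _) hB
      _ ≤ K := by rw [hKdef]; linarith
  refine ⟨K, hKpos, ?_⟩
  intro u h h0 hu
  set C := {w : E | ∀ a ∈ T, ⟪a, w⟫ ≤ 0} with hC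
  have hCne : C.Nonempty := ⟨0, fun a _ => by simp⟩
  have hCconv : Convex ℝ C := by
    intro w₁ h₁ w₂ h₂ p q hp hq hpq a ha
    have e : ⟪a, p • w₁ + q • w₂⟫ = p * ⟪a, w₁⟫ + q * ⟪a, w₂⟫ := by
      rw [inner_add_right, real_inner_smul_right, real_inner_smul_right]
    rw [Set.mem_setOf_eq] at h₁ h₂
    rw [e]
    nlinarith [h₁ a ha, h₂ a ha]
  have hCclosed : IsClosed C := by
    have : C = ⋂ a ∈ T, {w : E | ⟪a, w⟫ ≤ 0} := by
      ext w; simp [hC, Set.mem_iInter]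
    rw [this]
    exact isClosed_biInter fun a _ =>
      isClosed_le (Continuous.inner continuous_const continuous_id) continuous_const
  obtain ⟨w, hwC, hwmin⟩ :=
    exists_norm_eq_iInf_of_complete_convex hCne hCclosed.isComplete hCconv u
  have hvar : ∀ x ∈ C, ⟪u - w, x - w⟫ ≤ 0 :=
    (norm_eq_iInf_iff_real_inner_le_zero hCconv hwC).1 hwmin
  have h0C : (0 : E) ∈ C := fun a _ => by simp
  have h2w : (2 : ℝ) • w ∈ C := by
    intro a ha
    rw [real_inner_smul_right]
    nlinarith [hwC a ha]
  have hyw : ⟪u - w, w⟫ = 0 := by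
    have hv1 := hvar 0 h0C
    have hv2 := hvar ((2 : ℝ) • w) h2w
    have e1 : ⟪u - w, (0 : E) - w⟫ = -⟪u - w, w⟫ := by rw [zero_sub, inner_neg_right]
    have e2 : (2 : ℝ) • w - w = w := by rw [two_smul]; abel
    rw [e1] at hv1
    rw [e2] at hv2
    linarith
  have hyC : ∀ x ∈ C, ⟪u - w, x⟫ ≤ 0 := by
    intro x hx
    have := hvar x hx
    rw [inner_sub_right, hyw, sub_zero] at this
    exact this
  have hyT : u - w ∈ coneOf T := farkas T (u - w) fun x hxT => hyC x hxT
  obtain ⟨B, hBT, hBli, hyB⟩ := carath T (u - w) hyT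
  obtain ⟨lam, hlam, hylam⟩ := hyB
  have hKBeq : KB B = (coeff_bound B hBli).choose := by rw [hKB]; simp [hBli]
  have hcoef : ∑ a ∈ B, lam a ≤ KB B * ‖∑ a ∈ B, lam a • a‖ := by
    rw [hKBeq]
    exact (coeff_bound B hBli).choose_spec.2 lam hlam
  have hyy : ‖u - w‖ ^ 2 = ∑ a ∈ B, lam a * ⟪a, u⟫ := by
    have e1 : ‖u - w‖ ^ 2 = ⟪u - w, u - w⟫ := (real_inner_self_eq_norm_sq _).symm
    have e2 : ⟪u - w, u - w⟫ = ⟪u - w, u⟫ := by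
      rw [inner_sub_right, hyw, sub_zero]
    have e3 : ⟪u - w, u⟫ = ∑ a ∈ B, lam a * ⟪a, u⟫ := by
      rw [hylam, sum_inner]
      apply Finset.sum_congr rfl
      intro a _
      rw [real_inner_smul_left]
    rw [e1, e2, e3]
  have hle1 : ∑ a ∈ B, lam a * ⟪a, u⟫ ≤ (∑ a ∈ B, lam a) * h := by
    rw [Finset.sum_mul]
    apply Finset.sum_le_sum
    intro a ha
    exact mul_le_mul_of_nonneg_left (hu a (hBT ha)) (hlam a ha)
  have hKBK : KB B ≤ K := hKle B (Finset.mem_powerset.2 hBT)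
  have hKB0 : 0 < KB B := by
    rw [hKBeq]; exact (coeff_bound B hBli).choose_spec.1
  have hbound : ‖u - w‖ ^ 2 ≤ K * ‖u - w‖ * h := by
    have hc2 : ∑ a ∈ B, lam a ≤ KB B * ‖u - w‖ := by rw [hylam]; exact hcoef
    have hs0 : 0 ≤ ∑ a ∈ B, lam a := Finset.sum_nonneg hlam
    calc ‖u - w‖ ^ 2 = ∑ a ∈ B, lam a * ⟪a, u⟫ := hyy
      _ ≤ (∑ a ∈ B, lam a) * h := hle1
      _ ≤ (KB B * ‖u - w‖) * h := mul_le_mul_of_nonneg_right hc2 h0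
      _ ≤ (K * ‖u - w‖) * h := by
          have : KB B * ‖u - w‖ ≤ K * ‖u - w‖ :=
            mul_le_mul_of_nonneg_right hKBK (norm_nonneg _)
          exact mul_le_mul_of_nonneg_right this h0
  have hfinal : ‖u - w‖ ≤ K * h := by
    rcases eq_or_lt_of_le (norm_nonneg (u - w)) with h0' | h0'
    · rw [← h0']
      positivity
    · nlinarith [hbound]
  calc Metric.infDist u C ≤ dist u w := Metric.infDist_le_dist_of_mem hwC
    _ = ‖u - w‖ := by rw [dist_eq_norm]
    _ ≤ K * h := hfinal

end Aux


set_option maxHeartbeats 1000000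


/-- For a finite set `A ⊆ ℝⁿ` with tropical regions
`V γ = {u | ∀ δ ∈ A, ⟪δ,u⟫ ≤ ⟪γ,u⟫}`, and positive coefficients `c` with
`c α / c β < e^{ε₀}`, there is `c′ > 0` such that for distinct `α, β ∈ A`, any `s > 0` and any
`u ∈ V β` at distance at least `s` from `V α` one has
`c α · e^{⟪α,u⟫} < e^{ε₀ − 2·c′·s·‖α−β‖} · c β · e^{⟪β,u⟫}`. -/
theorem statement8 (n : ℕ) (hn : 1 ≤ n)
    (A : Finset (EuclideanSpace ℝ (Fin n)))
    (ε₀ : ℝ) (hε₀ : 0 < ε₀)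
    (c : EuclideanSpace ℝ (Fin n) → ℝ)
    (hcpos : ∀ α ∈ A, 0 < c α)
    (hratio : ∀ α ∈ A, ∀ β ∈ A, c α / c β < Real.exp ε₀) :
    ∃ c' > (0 : ℝ), ∀ α ∈ A, ∀ β ∈ A, α ≠ β → ∀ s > (0 : ℝ),
      ∀ u ∈ {u : EuclideanSpace ℝ (Fin n) | ∀ δ ∈ A, ⟪δ, u⟫ ≤ ⟪β, u⟫},
        s ≤ Metric.infDist u {w : EuclideanSpace ℝ (Fin n) | ∀ δ ∈ A, ⟪δ, w⟫ ≤ ⟪α, w⟫} →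
        c α * Real.exp ⟪α, u⟫ <
          Real.exp (ε₀ - 2 * c' * s * ‖α - β‖) * (c β * Real.exp ⟪β, u⟫) := by
  classical
  have hH : ∀ α : EuclideanSpace ℝ (Fin n), ∃ K : ℝ, 0 < K ∧
      ∀ (u : EuclideanSpace ℝ (Fin n)) (h : ℝ), 0 ≤ h →
        (∀ a ∈ A.image (· - α), ⟪a, u⟫ ≤ h) →
        Metric.infDist u {w : EuclideanSpace ℝ (Fin n) | ∀ a ∈ A.image (· - α), ⟪a, w⟫ ≤ 0}
          ≤ K * h := fun α => hoffman (A.image (· - α))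
  choose K hKpos hKspec using hH
  set M : ℝ := 1 + ∑ α ∈ A, |K α| with hM
  set N : ℝ := 1 + ∑ α ∈ A, ∑ β ∈ A, ‖α - β‖ with hN
  clear_value M N
  have hsumM : 0 ≤ ∑ α ∈ A, |K α| := Finset.sum_nonneg fun _ _ => abs_nonneg _
  have hsumN : 0 ≤ ∑ α ∈ A, ∑ β ∈ A, ‖α - β‖ :=
    Finset.sum_nonneg fun _ _ => Finset.sum_nonneg fun _ _ => norm_nonneg _
  have hM0 : 0 < M := by rw [hM]; linarith
  have hN0 : 0 < N := by rw [hN]; linarith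
  have hKM : ∀ α ∈ A, K α ≤ M := by
    intro α hα
    calc K α ≤ |K α| := le_abs_self _
      _ ≤ ∑ α ∈ A, |K α| := Finset.single_le_sum (f := fun α => |K α|)
          (fun _ _ => abs_nonneg _) hα
      _ ≤ M := by rw [hM]; linarith
  have hNbd : ∀ α ∈ A, ∀ β ∈ A, ‖α - β‖ ≤ N := by
    intro α hα β hβ
    calc ‖α - β‖ ≤ ∑ β ∈ A, ‖α - β‖ := Finset.single_le_sum (f := fun β => ‖α - β‖)
          (fun _ _ => norm_nonneg _) hβ
      _ ≤ ∑ α ∈ A, ∑ β ∈ A, ‖α - β‖ := Finset.single_le_sum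
          (f := fun α => ∑ β ∈ A, ‖α - β‖)
          (fun _ _ => Finset.sum_nonneg fun _ _ => norm_nonneg _) hα
      _ ≤ N := by rw [hN]; linarith
  refine ⟨(2 * M * N)⁻¹, by positivity, ?_⟩
  intro α hα β hβ hne s hs u hu hdist
  rw [Set.mem_setOf_eq] at hu
  set h : ℝ := ⟪β, u⟫ - ⟪α, u⟫ with hh
  clear_value h
  have hh0 : 0 ≤ h := by rw [hh]; exact sub_nonneg.2 (hu α hα)
  have hseteq : {w : EuclideanSpace ℝ (Fin n) | ∀ δ ∈ A, ⟪δ, w⟫ ≤ ⟪α, w⟫}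
      = {w : EuclideanSpace ℝ (Fin n) | ∀ a ∈ A.image (· - α), ⟪a, w⟫ ≤ 0} := by
    ext w
    simp only [Set.mem_setOf_eq, Finset.mem_image]
    constructor
    · rintro hw a ⟨δ, hδ, rfl⟩
      rw [inner_sub_left]
      linarith [hw δ hδ]
    · intro hw δ hδ
      have := hw (δ - α) ⟨δ, hδ, rfl⟩
      rw [inner_sub_left] at this
      linarith
  rw [hseteq] at hdist
  have hbd : ∀ a ∈ A.image (· - α), ⟪a, u⟫ ≤ h := by
    rintro a ha
    rw [Finset.mem_image] at ha
    obtain ⟨δ, hδ, rfl⟩ := ha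
    rw [inner_sub_left]
    have := hu δ hδ
    rw [hh]
    linarith
  have hsK : s ≤ K α * h := le_trans hdist (hKspec α u h hh0 hbd)
  have hab : 0 ≤ ‖α - β‖ := norm_nonneg _
  have habN : ‖α - β‖ ≤ N := hNbd α hα β hβ
  have hKh0 : 0 ≤ K α * h := mul_nonneg (hKpos α).le hh0
  have t1 : s * ‖α - β‖ ≤ (K α * h) * N := mul_le_mul hsK habN hab hKh0
  have t2 : (K α * h) * N ≤ (M * h) * N :=
    mul_le_mul_of_nonneg_right (mul_le_mul_of_nonneg_right (hKM α hα) hh0) hN0.le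
  have hkey : 2 * (2 * M * N)⁻¹ * s * ‖α - β‖ ≤ h := by
    have e1 : 2 * (2 * M * N)⁻¹ * s * ‖α - β‖ = (M * N)⁻¹ * (s * ‖α - β‖) := by
      field_simp
    have e2 : (M * N)⁻¹ * ((M * h) * N) = h := by
      field_simp
    calc 2 * (2 * M * N)⁻¹ * s * ‖α - β‖ = (M * N)⁻¹ * (s * ‖α - β‖) := e1
      _ ≤ (M * N)⁻¹ * ((M * h) * N) := by
          apply mul_le_mul_of_nonneg_left (le_trans t1 t2) (by positivity)
      _ = h := e2
  have hca : c α < Real.exp ε₀ * c β := by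
    have := hratio α hα β hβ
    rwa [div_lt_iff₀ (hcpos β hβ)] at this
  have eexp : Real.exp (ε₀ - h) * (c β * Real.exp ⟪β, u⟫)
      = (Real.exp ε₀ * c β) * Real.exp ⟪α, u⟫ := by
    have e1 : Real.exp (ε₀ - h) * Real.exp ⟪β, u⟫ = Real.exp ε₀ * Real.exp ⟪α, u⟫ := by
      rw [← Real.exp_add, ← Real.exp_add]
      congr 1
      rw [hh]
      ring
    calc Real.exp (ε₀ - h) * (c β * Real.exp ⟪β, u⟫)
        = (Real.exp (ε₀ - h) * Real.exp ⟪β, u⟫) * c β := by ring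
      _ = (Real.exp ε₀ * Real.exp ⟪α, u⟫) * c β := by rw [e1]
      _ = (Real.exp ε₀ * c β) * Real.exp ⟪α, u⟫ := by ring
  calc c α * Real.exp ⟪α, u⟫
      < (Real.exp ε₀ * c β) * Real.exp ⟪α, u⟫ :=
        mul_lt_mul_of_pos_right hca (Real.exp_pos _)
    _ = Real.exp (ε₀ - h) * (c β * Real.exp ⟪β, u⟫) := eexp.symm
    _ ≤ Real.exp (ε₀ - 2 * (2 * M * N)⁻¹ * s * ‖α - β‖) * (c β * Real.exp ⟪β, u⟫) := by
        apply mul_le_mul_of_nonneg_right (Real.exp_le_exp.2 (by linarith))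
        exact mul_nonneg (hcpos β hβ).le (Real.exp_pos _).le
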